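/- Let X be a finite-dimensional real normed space, G : X → X a globally Lipschitz map, and u, v : [0,∞) → X two solutions of u̇ = G(u). Then for all t ≥ 0, ‖u(t) − v(t)‖ ≤ e^{M⁺[G]·t} ‖u(0) − v(0)‖, where M⁺[G] = sup_{x≠y} (x−y, G(x)−G(y))_+ / ‖x−y‖² is the strong least upper bound logarithmic Lipschitz constant (assumed finite). -/

import Mathlib

open Filter

/-- Right semi inner product: `(x,y)₊ = ‖x‖ · lim_{h→0⁺} (‖x+hy‖-‖x‖)/h`. -/
noncomputable def sipPlus {X : Type*} [NormedAddCommGroup X] [NormedSpace ℝ X] (x y : X) : ℝ :=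
  ‖x‖ * limUnder (nhdsWithin 0 (Set.Ioi 0)) (fun h : ℝ => (‖x + h • y‖ - ‖x‖) / h)

/-- The set of values whose supremum is the strong lub logarithmic Lipschitz constant
`M⁺[G] = sup_{x ≠ y} (x-y, G(x)-G(y))₊ / ‖x-y‖²`. -/
def MplusSet {X : Type*} [NormedAddCommGroup X] [NormedSpace ℝ X] (G : X → X) : Set ℝ :=
  {c | ∃ x y : X, x ≠ y ∧ c = sipPlus (x - y) (G x - G y) / ‖x - y‖ ^ 2}

section Aux

variable {X : Type*} [NormedAddCommGroup X] [NormedSpace ℝ X]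

noncomputable def rightDeriv (x y : X) : ℝ :=
  sInf ((fun h : ℝ => (‖x + h • y‖ - ‖x‖) / h) '' Set.Ioi 0)

theorem convexOn_g (x y : X) : ConvexOn ℝ Set.univ (fun h : ℝ => ‖x + h • y‖) := by
  have := (convexOn_norm (convex_univ (E := X))).comp_affineMap
    (AffineMap.lineMap x (x + y))
  have h2 : (norm ∘ (AffineMap.lineMap x (x + y) : ℝ →ᵃ[ℝ] X)) = fun h : ℝ => ‖x + h • y‖ := by
    funext h
    simp [Function.comp, AffineMap.lineMap_apply, add_sub_cancel_left, add_comm]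
  rw [← h2]
  simpa using this

theorem mono_g (x y : X) :
    MonotoneOn (fun h : ℝ => (‖x + h • y‖ - ‖x‖) / h) (Set.Ioi 0) := by
  intro a ha b hb hab
  have := (convexOn_g x y).secant_mono (a := 0) (x := a) (y := b)
    (Set.mem_univ _) (Set.mem_univ _) (Set.mem_univ _) (ne_of_gt ha) (ne_of_gt hb) hab
  simpa using this

theorem bdd_g (x y : X) :
    BddBelow ((fun h : ℝ => (‖x + h • y‖ - ‖x‖) / h) '' Set.Ioi 0) := by
  refine ⟨-‖y‖, ?_⟩
  rintro _ ⟨h, hh, rfl⟩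
  rw [Set.mem_Ioi] at hh
  rw [le_div_iff₀ hh]
  have h1 : ‖x‖ - ‖x + h • y‖ ≤ ‖h • y‖ := by
    have := norm_sub_norm_le x (x + h • y)
    simpa using this
  have h2 : ‖h • y‖ = h * ‖y‖ := by
    rw [norm_smul, Real.norm_eq_abs, abs_of_pos hh]
  nlinarith

theorem tendsto_g (x y : X) :
    Tendsto (fun h : ℝ => (‖x + h • y‖ - ‖x‖) / h) (nhdsWithin 0 (Set.Ioi 0))
      (nhds (rightDeriv x y)) :=
  MonotoneOn.tendsto_nhdsGT (mono_g x y) (bdd_g x y)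

theorem sipPlus_eq (x y : X) : sipPlus x y = ‖x‖ * rightDeriv x y := by
  unfold sipPlus
  rw [(tendsto_g x y).limUnder_eq]

theorem rightDeriv_zero (y : X) : rightDeriv (0 : X) y = ‖y‖ := by
  have : ∀ h ∈ Set.Ioi (0 : ℝ), (‖(0 : X) + h • y‖ - ‖(0 : X)‖) / h = ‖y‖ := by
    intro h hh
    rw [Set.mem_Ioi] at hh
    rw [zero_add, norm_zero, sub_zero, norm_smul, Real.norm_eq_abs, abs_of_pos hh,
      mul_comm, mul_div_assoc, div_self hh.ne', mul_one]
  have himg : (fun h : ℝ => (‖(0 : X) + h • y‖ - ‖(0 : X)‖) / h) '' Set.Ioi 0 = {‖y‖} := by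
    ext c
    simp only [Set.mem_image, Set.mem_singleton_iff]
    constructor
    · rintro ⟨h, hh, rfl⟩; exact this h hh
    · rintro rfl; exact ⟨1, Set.mem_Ioi.2 one_pos, this 1 (Set.mem_Ioi.2 one_pos)⟩
  rw [rightDeriv, himg, csInf_singleton]

/-- The right slope of `‖w ·‖` tends to `rightDeriv (w s) w'` when `w` has derivative `w'`. -/
theorem tendsto_slope_norm {w : ℝ → X} {w' : X} {s : ℝ} (hw : HasDerivAt w w' s) :
    Tendsto (fun z => (z - s)⁻¹ * (‖w z‖ - ‖w s‖)) (nhdsWithin s (Set.Ioi s))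
      (nhds (rightDeriv (w s) w')) := by
  have hsub : Tendsto (fun z : ℝ => z - s) (nhdsWithin s (Set.Ioi s))
      (nhdsWithin 0 (Set.Ioi 0)) := by
    apply tendsto_nhdsWithin_of_tendsto_nhds_of_eventually_within
    · have h1 : Tendsto (fun z : ℝ => z - s) (nhds s) (nhds (s - s)) :=
        ((continuous_id.sub continuous_const).tendsto s)
      simpa using h1.mono_left nhdsWithin_le_nhds
    · filter_upwards [self_mem_nhdsWithin] with z hz
      exact Set.mem_Ioi.2 (sub_pos.2 hz)
  have hmain : Tendsto (fun z => (‖w s + (z - s) • w'‖ - ‖w s‖) / (z - s))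
      (nhdsWithin s (Set.Ioi s)) (nhds (rightDeriv (w s) w')) :=
    (tendsto_g (w s) w').comp hsub
  have herr : Tendsto (fun z => ‖z - s‖⁻¹ * ‖w z - w s - (z - s) • w'‖)
      (nhdsWithin s (Set.Ioi s)) (nhds 0) :=
    (hasDerivAt_iff_tendsto.1 hw).mono_left nhdsWithin_le_nhds
  have key : ∀ᶠ z in nhdsWithin s (Set.Ioi s),
      |(z - s)⁻¹ * (‖w z‖ - ‖w s‖) - (‖w s + (z - s) • w'‖ - ‖w s‖) / (z - s)|
        ≤ ‖z - s‖⁻¹ * ‖w z - w s - (z - s) • w'‖ := by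
    filter_upwards [self_mem_nhdsWithin] with z hz
    have hpos : (0 : ℝ) < z - s := sub_pos.2 hz
    have habs : |(‖w z‖ - ‖w s‖) - (‖w s + (z - s) • w'‖ - ‖w s‖)|
        ≤ ‖w z - w s - (z - s) • w'‖ := by
      calc |(‖w z‖ - ‖w s‖) - (‖w s + (z - s) • w'‖ - ‖w s‖)|
          = |‖w z‖ - ‖w s + (z - s) • w'‖| := by congr 1; ring
        _ ≤ ‖w z - (w s + (z - s) • w')‖ := abs_norm_sub_norm_le _ _
        _ = ‖w z - w s - (z - s) • w'‖ := by rw [sub_add_eq_sub_sub]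
    rw [div_eq_inv_mul, ← mul_sub, abs_mul, abs_inv, abs_of_pos hpos,
      Real.norm_eq_abs, abs_of_pos hpos]
    exact mul_le_mul_of_nonneg_left habs (inv_nonneg.2 hpos.le)
  have hdiff : Tendsto (fun z => (z - s)⁻¹ * (‖w z‖ - ‖w s‖)
      - (‖w s + (z - s) • w'‖ - ‖w s‖) / (z - s)) (nhdsWithin s (Set.Ioi s)) (nhds 0) := by
    apply squeeze_zero_norm' _ herr
    simpa [Real.norm_eq_abs] using key
  have := hdiff.add hmain
  simp only [sub_add_cancel, zero_add] at this
  exact this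

end Aux

/-- For a globally Lipschitz vector field `G` on a finite-dimensional real normed space with
finite strong lub logarithmic Lipschitz constant `M⁺[G]`, any two solutions of `u̇ = G(u)`
satisfy `‖u(t) - v(t)‖ ≤ e^{M⁺[G]·t} ‖u(0) - v(0)‖` for `t ≥ 0`. -/
theorem contraction_estimate {X : Type*} [NormedAddCommGroup X] [NormedSpace ℝ X]
    [FiniteDimensional ℝ X] [Nontrivial X]
    (G : X → X) (K : NNReal) (hG : LipschitzWith K G)
    (hbdd : BddAbove (MplusSet G))
    (u v : ℝ → X)
    (hu : ∀ t, HasDerivAt u (G (u t)) t)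
    (hv : ∀ t, HasDerivAt v (G (v t)) t)
    (t : ℝ) (ht : 0 ≤ t) :
    ‖u t - v t‖ ≤ Real.exp (sSup (MplusSet G) * t) * ‖u 0 - v 0‖ := by
  set M := sSup (MplusSet G) with hM
  set w : ℝ → X := fun s => u s - v s with hwdef
  have hw : ∀ s, HasDerivAt w (G (u s) - G (v s)) s := fun s => (hu s).sub (hv s)
  -- the bound on the right derivative
  have bound : ∀ s : ℝ, rightDeriv (w s) (G (u s) - G (v s)) ≤ M * ‖w s‖ := by
    intro s
    by_cases h0 : w s = 0
    · have huv : u s = v s := sub_eq_zero.1 h0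
      rw [h0, rightDeriv_zero, huv]
      simp
    · have hne : u s ≠ v s := fun h => h0 (by rw [hwdef]; simp [h])
      have hmem : sipPlus (u s - v s) (G (u s) - G (v s)) / ‖u s - v s‖ ^ 2 ∈ MplusSet G :=
        ⟨u s, v s, hne, rfl⟩
      have hle : sipPlus (u s - v s) (G (u s) - G (v s)) / ‖u s - v s‖ ^ 2 ≤ M :=
        le_csSup hbdd hmem
      have hnorm : (0 : ℝ) < ‖w s‖ := norm_pos_iff.2 h0
      rw [sipPlus_eq] at hle
      have hws : u s - v s = w s := rfl
      rw [hws, div_le_iff₀ (by positivity)] at hle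
      have := hle
      nlinarith
  have hwc : Continuous w := by
    rw [continuous_iff_continuousAt]
    exact fun s => (hw s).continuousAt
  have hfc : ContinuousOn (fun s => ‖w s‖) (Set.Icc 0 t) :=
    (continuous_norm.comp hwc).continuousOn
  have main := le_gronwallBound_of_liminf_deriv_right_le (f := fun s => ‖w s‖)
    (f' := fun s => M * ‖w s‖) (δ := ‖w 0‖) (K := M) (ε := 0) (a := 0) (b := t)
    hfc ?_ le_rfl (fun x _ => by simp) t (Set.mem_Icc.2 ⟨ht, le_rfl⟩)
  · rw [sub_zero, gronwallBound_ε0, mul_comm] at main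
    exact main
  · intro x _ r hr
    have htend := tendsto_slope_norm (hw x)
    have hlt : rightDeriv (w x) (G (u x) - G (v x)) < r := lt_of_le_of_lt (bound x) hr
    have hev : ∀ᶠ z in nhdsWithin x (Set.Ioi x),
        (z - x)⁻¹ * (‖w z‖ - ‖w x‖) < r :=
      htend.eventually_lt_const hlt
    exact hev.frequently
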